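/- Let S be a commutative ring with 1 ≠ 0, and let p(X) = p₀ + p₁X + ⋯ + pₘXᵐ be a Laurent polynomial in S[X, X⁻¹] whose constant coefficient p₀ and leading coefficient pₘ are units of S. Then the quotient ring T = S[X, X⁻¹]/(p(X)), viewed as an S-module, is free of rank m. -/

import Mathlib

open LaurentPolynomial

open Polynomial in
/-- If `p = p₀ + p₁X + ⋯ + pₘXᵐ` is a Laurent polynomial over a nontrivial commutative
ring `S` whose constant coefficient `p₀` and leading coefficient `pₘ` are units, then
`S[X,X⁻¹]/(p)` is a free `S`-module of rank `m`. -/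
theorem laurent_quotient_free_of_rank' (S : Type*) [CommRing S] [Nontrivial S]
    (m : ℕ) (c : ℕ → S) (hc0 : IsUnit (c 0)) (hcm : IsUnit (c m))
    (p : LaurentPolynomial S)
    (hp : p = ∑ i ∈ Finset.range (m + 1), LaurentPolynomial.C (c i) * T (i : ℤ)) :
    Module.Free S (LaurentPolynomial S ⧸ Ideal.span {p}) ∧
      Module.rank S (LaurentPolynomial S ⧸ Ideal.span {p}) = m := by
  classical
  set q : Polynomial S := ∑ i ∈ Finset.range (m + 1), Polynomial.C (c i) * Polynomial.X ^ i
    with hqdef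
  have hcoeff : ∀ n, q.coeff n = if n ∈ Finset.range (m + 1) then c n else 0 := by
    intro n
    simp [hqdef, Polynomial.finset_sum_coeff, Polynomial.coeff_C_mul, Polynomial.coeff_X_pow,
      Finset.sum_ite_eq]
  have hq0 : q.coeff 0 = c 0 := by simp [hcoeff]
  have hqm : q.coeff m = c m := by simp [hcoeff]
  have hdeg : q.natDegree ≤ m := by
    rw [Polynomial.natDegree_le_iff_coeff_eq_zero]
    intro N hN
    rw [hcoeff]
    simp only [Finset.mem_range]
    rw [if_neg (by omega)]
  set u : Sˣ := hcm.unit with hudef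
  have hu : (u : S) = c m := hcm.unit_spec
  set q' : Polynomial S := Polynomial.C ((u⁻¹ : Sˣ) : S) * q with hq'def
  have hq'm : q'.coeff m = 1 := by
    rw [hq'def, Polynomial.coeff_C_mul, hqm, ← hu, Units.inv_mul]
  have hdeg' : q'.natDegree ≤ m := (Polynomial.natDegree_C_mul_le _ _).trans hdeg
  have hmonic : q'.Monic := Polynomial.monic_of_natDegree_le_of_coeff_eq_one m hdeg' hq'm
  have hq'deg : q'.natDegree = m :=
    Polynomial.natDegree_eq_of_le_of_coeff_ne_zero hdeg' (by rw [hq'm]; exact one_ne_zero)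
  have hq'q : q = Polynomial.C (u : S) * q' := by
    rw [hq'def, ← mul_assoc, ← Polynomial.C_mul, Units.mul_inv, Polynomial.C_1, one_mul]
  set A := AdjoinRoot q' with hAdef
  set r : A := AdjoinRoot.root q' with hrdef
  have hr' : Polynomial.aeval r q' = 0 := by
    rw [AdjoinRoot.aeval_eq, AdjoinRoot.mk_self]
  have hr : Polynomial.aeval r q = 0 := by
    rw [hq'q, map_mul, hr', mul_zero]
  have hsum : (0 : A) = ∑ i ∈ Finset.range (m + 1), algebraMap S A (c i) * r ^ i := by
    rw [← hr, hqdef]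
    simp [map_sum, Polynomial.aeval_C]
  have hru : IsUnit r := by
    rw [Finset.sum_range_succ', pow_zero, mul_one] at hsum
    have h3 : algebraMap S A (c 0) =
        r * (-∑ i ∈ Finset.range m, algebraMap S A (c (i + 1)) * r ^ i) := by
      rw [mul_neg, Finset.mul_sum]
      have hterm : ∀ i ∈ Finset.range m,
          r * (algebraMap S A (c (i + 1)) * r ^ i) = algebraMap S A (c (i + 1)) * r ^ (i + 1) :=
        fun i _ => by ring
      rw [Finset.sum_congr rfl hterm]
      linear_combination -hsum
    exact isUnit_of_mul_isUnit_left (h3 ▸ hc0.map (algebraMap S A))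
  set ru : Aˣ := hru.unit with hrudef
  have hru : (ru : A) = r := hru.unit_spec
  set ψ : LaurentPolynomial S →ₐ[S] A :=
    AddMonoidAlgebra.lift S A ℤ ((Units.coeHom A).comp ((zpowersHom Aˣ) ru)) with hψdef
  have hψT : ∀ n : ℤ, ψ (T n) = ((ru ^ n : Aˣ) : A) := by
    intro n
    show (AddMonoidAlgebra.lift S A ℤ) _ (AddMonoidAlgebra.single n 1) = _
    rw [AddMonoidAlgebra.lift_single, one_smul]
    rfl
  have htl : Polynomial.toLaurent q = p := by
    rw [hp, hqdef, map_sum]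
    refine Finset.sum_congr rfl fun i _ => ?_
    rw [map_mul, Polynomial.toLaurent_C, Polynomial.toLaurent_X_pow]
  have hcompψ : ψ.comp Polynomial.toLaurentAlg = Polynomial.aeval r := by
    apply Polynomial.algHom_ext
    simp only [AlgHom.comp_apply, Polynomial.toLaurentAlg_apply, Polynomial.toLaurent_X,
      Polynomial.aeval_X]
    rw [hψT 1, zpow_one, hru]
  have hψp : ψ p = 0 := by
    calc ψ p = ψ (Polynomial.toLaurent q) := by rw [htl]
      _ = Polynomial.aeval r q := by
          rw [← Polynomial.toLaurentAlg_apply, ← AlgHom.comp_apply, hcompψ]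
      _ = 0 := hr
  set g : (LaurentPolynomial S ⧸ Ideal.span {p}) →ₐ[S] A :=
    Ideal.Quotient.liftₐ (Ideal.span {p}) ψ (by
      intro a ha
      rw [Ideal.mem_span_singleton] at ha
      obtain ⟨b, rfl⟩ := ha
      rw [map_mul, hψp, zero_mul]) with hgdef
  set mk : LaurentPolynomial S →ₐ[S] (LaurentPolynomial S ⧸ Ideal.span {p}) :=
    Ideal.Quotient.mkₐ S (Ideal.span {p}) with hmkdef
  have hgmk : ∀ a, g (mk a) = ψ a := fun a => by
    rw [hgdef, hmkdef, Ideal.Quotient.liftₐ_apply, Ideal.Quotient.mkₐ_eq_mk]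
    rfl
  set x : LaurentPolynomial S ⧸ Ideal.span {p} := mk (T 1) with hxdef
  have hmkp : mk p = 0 := by
    rw [hmkdef, Ideal.Quotient.mkₐ_eq_mk, Ideal.Quotient.eq_zero_iff_mem]
    exact Ideal.mem_span_singleton_self p
  have hcompmk : mk.comp Polynomial.toLaurentAlg = Polynomial.aeval x := by
    apply Polynomial.algHom_ext
    simp only [AlgHom.comp_apply, Polynomial.toLaurentAlg_apply, Polynomial.toLaurent_X,
      Polynomial.aeval_X, hxdef]
  have hx : Polynomial.aeval x q' = 0 := by
    have h1 : Polynomial.toLaurent q' = LaurentPolynomial.C ((u⁻¹ : Sˣ) : S) * p := by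
      rw [← htl, hq'def, map_mul, Polynomial.toLaurent_C]
    calc Polynomial.aeval x q' = mk (Polynomial.toLaurent q') := by
          rw [← Polynomial.toLaurentAlg_apply, ← AlgHom.comp_apply, hcompmk]
      _ = 0 := by rw [h1, map_mul, hmkp, mul_zero]
  set f : A →ₐ[S] (LaurentPolynomial S ⧸ Ideal.span {p}) := AdjoinRoot.liftAlgHom q' (Algebra.ofId S _) x hx
    with hfdef
  have hfr : f r = x := by
    show AdjoinRoot.liftAlgHom q' (Algebra.ofId S _) x hx (AdjoinRoot.root q') = x
    exact AdjoinRoot.liftAlgHom_root _ _ _ _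
  -- the unit `mk (T 1)` in the quotient
  set tu : (LaurentPolynomial S ⧸ Ideal.span {p})ˣ :=
    ⟨mk (T 1), mk (T (-1)),
      by rw [← map_mul, ← T_add]; norm_num,
      by rw [← map_mul, ← T_add]; norm_num⟩ with htudef
  set fm : A →* (LaurentPolynomial S ⧸ Ideal.span {p}) := f.toRingHom.toMonoidHom with hfmdef
  have hunit : Units.map fm ru = tu := by
    apply Units.ext
    show f (ru : A) = mk (T 1)
    rw [hru, hfr, hxdef]
  have htupow : ∀ n : ℤ, ((tu ^ n : _ˣ) : LaurentPolynomial S ⧸ Ideal.span {p}) = mk (T n) := by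
    intro n
    cases n with
    | ofNat k =>
        rw [Int.ofNat_eq_coe, zpow_natCast, Units.val_pow_eq_pow_val]
        show (mk (T 1)) ^ k = _
        rw [← map_pow, T_pow, mul_one]
    | negSucc k =>
        rw [zpow_negSucc, ← inv_pow, Units.val_pow_eq_pow_val]
        show (mk (T (-1))) ^ (k + 1) = _
        rw [← map_pow, T_pow]
        congr 2
        simp [Int.negSucc_eq]
  have hgf : g.comp f = AlgHom.id S A := by
    apply AdjoinRoot.algHom_ext
    rw [AlgHom.comp_apply, AlgHom.id_apply, ← hrdef, hfr, hxdef, hgmk, hψT 1, zpow_one, hru]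
  have hfg : f.comp g = AlgHom.id S (LaurentPolynomial S ⧸ Ideal.span {p}) := by
    apply Ideal.Quotient.algHom_ext
    refine AddMonoidAlgebra.algHom_ext ?_ (Subsingleton.elim _ _)
    intro n
    show f (g (mk (AddMonoidAlgebra.single n 1))) = mk (AddMonoidAlgebra.single n 1)
    have hsingle : (AddMonoidAlgebra.single n 1 : LaurentPolynomial S) = T n := rfl
    rw [hsingle, hgmk, hψT n]
    have h5 : (Units.map fm (ru ^ n) : _ˣ) = ((Units.map fm ru) ^ n : _ˣ) :=
      map_zpow (Units.map fm) ru n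
    calc f ((ru ^ n : Aˣ) : A) = ((Units.map fm (ru ^ n) : _ˣ) : _) := rfl
      _ = (((Units.map fm ru) ^ n : _ˣ) : _) := by rw [h5]
      _ = ((tu ^ n : _ˣ) : _) := by rw [hunit]
      _ = mk (T n) := htupow n
  set e : (LaurentPolynomial S ⧸ Ideal.span {p}) ≃ₐ[S] A := AlgEquiv.ofAlgHom g f hgf hfg
    with hedef
  set pb : PowerBasis S A := AdjoinRoot.powerBasis' hmonic with hpbdef
  have hdim : pb.dim = m := hq'deg
  set b : Module.Basis (Fin pb.dim) S (LaurentPolynomial S ⧸ Ideal.span {p}) :=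
    pb.basis.map e.toLinearEquiv.symm with hbdef
  refine ⟨Module.Free.of_basis b, ?_⟩
  rw [rank_eq_card_basis b, Fintype.card_fin, hdim]

theorem laurent_quotient_free_of_rank (S : Type*) [CommRing S] [Nontrivial S]
    (m : ℕ) (c : ℕ → S) (hc0 : IsUnit (c 0)) (hcm : IsUnit (c m))
    (p : LaurentPolynomial S)
    (hp : p = ∑ i ∈ Finset.range (m + 1), LaurentPolynomial.C (c i) * T (i : ℤ)) :
    Module.Free S (LaurentPolynomial S ⧸ Ideal.span {p}) ∧
      Module.rank S (LaurentPolynomial S ⧸ Ideal.span {p}) = m :=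
  laurent_quotient_free_of_rank' S m c hc0 hcm p hp
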